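/- arXiv:0806.1879 — 2 statements merged into one kernel-verified Lean document; each statement's English description precedes it below -/
import Mathlib

section
/- If two skew diagrams λ/μ and α/β have equal skew Schur functions s_{λ/μ} = s_{α/β}, then they have the same multiset of column heights; in particular the partition obtained by sorting the column heights of λ/μ in decreasing order equals the one for α/β. -/
open YoungDiagram
open scoped Classical

namespace LRSkew

/-- The cells of the skew diagram `lam/mu`. -/
def skewCells (lam mu : YoungDiagram) : Finset (ℕ × ℕ) := lam.cells \ mu.cells

/-- A semistandard filling of the skew shape `lam/mu`: entries are positive exactly on the
cells of the shape, rows are weakly increasing and columns are strictly increasing. -/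
def IsSSYT (lam mu : YoungDiagram) (T : ℕ × ℕ → ℕ) : Prop :=
  (∀ p, p ∈ skewCells lam mu ↔ T p ≠ 0) ∧
  (∀ i j1 j2, (i, j1) ∈ skewCells lam mu → (i, j2) ∈ skewCells lam mu → j1 ≤ j2 →
    T (i, j1) ≤ T (i, j2)) ∧
  (∀ i1 i2 j, (i1, j) ∈ skewCells lam mu → (i2, j) ∈ skewCells lam mu → i1 < i2 →
    T (i1, j) < T (i2, j))

/-- The number of entries equal to `k` among the cells read (in the reverse reading word:
right to left along rows, top row first) up to position `(i,j)`. -/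
def prefixCount (lam mu : YoungDiagram) (T : ℕ × ℕ → ℕ) (i j k : ℕ) : ℕ :=
  ((skewCells lam mu).filter fun p => (p.1 < i ∨ (p.1 = i ∧ j ≤ p.2)) ∧ T p = k).card

/-- The reverse reading word of the filling is a lattice word. -/
def IsLattice (lam mu : YoungDiagram) (T : ℕ × ℕ → ℕ) : Prop :=
  ∀ i j k, prefixCount lam mu T i j (k + 2) ≤ prefixCount lam mu T i j (k + 1)

/-- The number of entries of the filling equal to `k`. -/
def content (lam mu : YoungDiagram) (T : ℕ × ℕ → ℕ) (k : ℕ) : ℕ :=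
  ((skewCells lam mu).filter fun p => T p = k).card

/-- A Littlewood–Richardson tableau of shape `lam/mu` and content `nu`. -/
def IsLR (lam mu nu : YoungDiagram) (T : ℕ × ℕ → ℕ) : Prop :=
  IsSSYT lam mu T ∧ IsLattice lam mu T ∧ ∀ i, content lam mu T (i + 1) = nu.rowLen i

/-- The Littlewood–Richardson coefficient `c(lam; mu, nu)`. -/
noncomputable def lrCoeff (lam mu nu : YoungDiagram) : ℕ :=
  if mu ≤ lam then {T : ℕ × ℕ → ℕ | IsLR lam mu nu T}.ncard else 0

/-- Equality of the skew Schur functions `s_{lam/mu} = s_{alp/bet}`, expressed through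
their expansions into Schur functions. -/
def SchurEq (lam mu alp bet : YoungDiagram) : Prop :=
  ∀ nu : YoungDiagram, lrCoeff lam mu nu = lrCoeff alp bet nu

/-- The rectangular Young diagram `(k^l)` with `l` rows of length `k`. -/
def rect (k l : ℕ) : YoungDiagram :=
  ⟨Finset.range l ×ˢ Finset.range k, by
    intro a b hba ha
    simp only [Finset.coe_product, Set.mem_prod, Finset.mem_coe, Finset.mem_range] at ha ⊢
    exact ⟨lt_of_le_of_lt hba.1 ha.1, lt_of_le_of_lt hba.2 ha.2⟩⟩

/-- The complement of `nu` in the rectangle `(k^l)`, rotated by 180 degrees so that it is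
again a partition: its parts are `(k - nu_l, …, k - nu_1)`. -/
def complRect (k l : ℕ) (nu : YoungDiagram) : YoungDiagram :=
  ⟨(rect k l).cells.filter fun p => (l - 1 - p.1, k - 1 - p.2) ∉ nu, by
    intro a b hba ha
    simp only [Finset.coe_filter, Set.mem_setOf_eq, mem_cells] at ha ⊢
    refine ⟨(rect k l).isLowerSet hba ha.1, fun hmem => ha.2 ?_⟩
    exact nu.isLowerSet
      (Prod.mk_le_mk.mpr ⟨Nat.sub_le_sub_left hba.1 _, Nat.sub_le_sub_left hba.2 _⟩) hmem⟩

/-- The staircase partition `(n, n-1, …, 2, 1)`. -/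
def staircase (n : ℕ) : YoungDiagram :=
  ⟨(Finset.range n ×ˢ Finset.range n).filter fun p => p.1 + p.2 < n, by
    intro a b hba ha
    simp only [Finset.coe_filter, Set.mem_setOf_eq, Finset.mem_product, Finset.mem_range] at ha ⊢
    exact ⟨⟨lt_of_le_of_lt hba.1 ha.1.1, lt_of_le_of_lt hba.2 ha.1.2⟩,
      lt_of_le_of_lt (Nat.add_le_add hba.1 hba.2) ha.2⟩⟩

/-- A basic skew diagram: no empty rows and no empty columns. -/
def IsBasic (lam mu : YoungDiagram) : Prop :=
  (∀ i, i < lam.colLen 0 → mu.rowLen i < lam.rowLen i) ∧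
  (∀ j, j < lam.rowLen 0 → mu.colLen j < lam.colLen j)

/-- A (basic) skew diagram is connected iff consecutive rows share a column. -/
def IsConnectedSkew (lam mu : YoungDiagram) : Prop :=
  ∀ i, i + 1 < lam.colLen 0 → mu.rowLen i < lam.rowLen (i + 1)

/-- The number of distinct (positive) part sizes of a partition. -/
def dp (lam : YoungDiagram) : ℕ :=
  ((Finset.range (lam.colLen 0)).image fun i => lam.rowLen i).card

/-- A partition is a rectangle: all its parts are equal. -/
def IsRect (mu : YoungDiagram) : Prop :=
  ∀ i, i < mu.colLen 0 → mu.rowLen i = mu.rowLen 0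

/-- Cells of a skew diagram in the same connected component: the reflexive–transitive
closure of sharing a row or a column. -/
def SameComp (s : Finset (ℕ × ℕ)) : ℕ × ℕ → ℕ × ℕ → Prop :=
  Relation.ReflTransGen fun a b => a ∈ s ∧ b ∈ s ∧ (a.1 = b.1 ∨ a.2 = b.2)

/-- Two finite sets of boxes agree up to translation or 180°-rotation of each connected
component independently. -/
def UpToTransRot (s t : Finset (ℕ × ℕ)) : Prop :=
  ∃ f : ℕ × ℕ → ℕ × ℕ, Set.BijOn f ↑s ↑t ∧
    ∀ p ∈ s, ∀ q ∈ s, SameComp s p q →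
      (((f q).1 : ℤ) - (f p).1 = (q.1 : ℤ) - p.1 ∧ ((f q).2 : ℤ) - (f p).2 = (q.2 : ℤ) - p.2) ∨
      (((f q).1 : ℤ) - (f p).1 = (p.1 : ℤ) - q.1 ∧ ((f q).2 : ℤ) - (f p).2 = (p.2 : ℤ) - q.2)


-- ==================== auxiliary development ====================

lemma mem_skew_iff {lam mu : YoungDiagram} {i j : ℕ} :
    (i, j) ∈ skewCells lam mu ↔ mu.colLen j ≤ i ∧ i < lam.colLen j := by
  simp only [skewCells, Finset.mem_sdiff, mem_cells, YoungDiagram.mem_iff_lt_colLen, not_lt]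
  tauto

lemma col_bound {lam mu : YoungDiagram} {i j : ℕ} (h : (i, j) ∈ skewCells lam mu) :
    j < lam.rowLen 0 := by
  have h1 : (i, j) ∈ lam := (Finset.mem_sdiff.mp h).1
  exact lt_of_lt_of_le (YoungDiagram.mem_iff_lt_rowLen.mp h1)
    (lam.rowLen_anti 0 i (Nat.zero_le i))

/-- column heights of the skew shape -/
def ht (lam mu : YoungDiagram) (j : ℕ) : ℕ := lam.colLen j - mu.colLen j

/-- number of columns of height at least `k` -/
def mstar (lam mu : YoungDiagram) (k : ℕ) : ℕ :=
  ((Finset.range (lam.rowLen 0)).filter fun j => k ≤ ht lam mu j).card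

lemma mstar_anti (lam mu : YoungDiagram) {a b : ℕ} (hab : a ≤ b) :
    mstar lam mu b ≤ mstar lam mu a := by
  apply Finset.card_le_card
  intro x hx
  simp only [Finset.mem_filter, Finset.mem_range] at hx ⊢
  omega

lemma depth_lt {lam mu : YoungDiagram} {T : ℕ × ℕ → ℕ} (hT : IsSSYT lam mu T) :
    ∀ i j, (i, j) ∈ skewCells lam mu → i - mu.colLen j < T (i, j) := by
  intro i
  induction i with
  | zero => intro j hm; have := (hT.1 _).mp hm; omega
  | succ n ih =>
    intro j hm
    rcases mem_skew_iff.mp hm with ⟨hc, hl⟩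
    rcases Nat.lt_or_ge n (mu.colLen j) with hx | hx
    · have := (hT.1 _).mp hm; omega
    · have hm' : (n, j) ∈ skewCells lam mu := mem_skew_iff.mpr ⟨hx, by omega⟩
      have h1 := ih j hm'
      have h2 := hT.2.2 n (n + 1) j hm' hm (Nat.lt_succ_self n)
      omega

/-- Upper bound: partial sums of the content of any LR tableau. -/
lemma sum_le_mstar {lam mu nu : YoungDiagram} {T : ℕ × ℕ → ℕ} (hT : IsLR lam mu nu T) (k : ℕ) :
    ∑ i ∈ Finset.range k, nu.rowLen i ≤ ∑ i ∈ Finset.range k, mstar lam mu (i + 1) := by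
  classical
  have hpos : ∀ p ∈ skewCells lam mu, T p ≠ 0 := fun p hp => (hT.1.1 p).mp hp
  set A : Finset (ℕ × ℕ) := (skewCells lam mu).filter (fun p => T p ≤ k) with hA
  have hAeq : A = (Finset.range k).biUnion
      (fun i => (skewCells lam mu).filter (fun p => T p = i + 1)) := by
    ext p
    simp only [hA, Finset.mem_biUnion, Finset.mem_filter, Finset.mem_range]
    constructor
    · rintro ⟨hp, hk⟩
      have := hpos p hp
      exact ⟨T p - 1, by omega, hp, by omega⟩
    · rintro ⟨i, hi, hp, he⟩; exact ⟨hp, by omega⟩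
  have hdisjA : ∀ i ∈ Finset.range k, ∀ i' ∈ Finset.range k, i ≠ i' →
      Disjoint ((skewCells lam mu).filter (fun p => T p = i + 1))
        ((skewCells lam mu).filter (fun p => T p = i' + 1)) := by
    intro i _ i' _ hne
    refine Finset.disjoint_left.mpr ?_
    intro p hp hp'
    simp only [Finset.mem_filter] at hp hp'
    omega
  have hcardA : A.card = ∑ i ∈ Finset.range k, nu.rowLen i := by
    rw [hAeq, Finset.card_biUnion hdisjA]
    exact Finset.sum_congr rfl fun i _ => hT.2.2 i
  set X : Finset (ℕ × ℕ) := (Finset.range k).biUnion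
      (fun d => ((Finset.range (lam.rowLen 0)).filter
        (fun j => d + 1 ≤ ht lam mu j)).image (fun j => (d, j))) with hX
  have hdisjX : ∀ d ∈ Finset.range k, ∀ d' ∈ Finset.range k, d ≠ d' →
      Disjoint (((Finset.range (lam.rowLen 0)).filter
          (fun j => d + 1 ≤ ht lam mu j)).image (fun j => (d, j)))
        (((Finset.range (lam.rowLen 0)).filter
          (fun j => d' + 1 ≤ ht lam mu j)).image (fun j => (d', j))) := by
    intro d _ d' _ hne
    refine Finset.disjoint_left.mpr ?_
    intro p hp hp'
    simp only [Finset.mem_image] at hp hp'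
    obtain ⟨a, _, rfl⟩ := hp
    obtain ⟨b, _, hb⟩ := hp'
    exact hne (by simpa using congrArg Prod.fst hb.symm)
  have hcardX : X.card = ∑ i ∈ Finset.range k, mstar lam mu (i + 1) := by
    rw [hX, Finset.card_biUnion hdisjX]
    refine Finset.sum_congr rfl fun d _ => ?_
    rw [Finset.card_image_of_injective _ (fun a b hab => by simpa using congrArg Prod.snd hab)]
    rfl
  have hle : A.card ≤ X.card := by
    refine Finset.card_le_card_of_injOn (fun p => (p.1 - mu.colLen p.2, p.2)) ?_ ?_
    · intro p hp
      simp only [hA, Finset.mem_coe, Finset.mem_filter] at hp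
      obtain ⟨hp1, hp2⟩ := hp
      obtain ⟨i, j⟩ := p
      have hd := depth_lt hT.1 i j hp1
      rcases mem_skew_iff.mp hp1 with ⟨hc, hl⟩
      simp only [Finset.mem_coe, hX, Finset.mem_biUnion, Finset.mem_image, Finset.mem_filter, Finset.mem_range]
      exact ⟨i - mu.colLen j, by omega, j, ⟨col_bound hp1, by unfold ht; omega⟩, rfl⟩
    · intro p hp q hq heq
      obtain ⟨i, j⟩ := p
      obtain ⟨i', j'⟩ := q
      simp only [hA, Finset.mem_coe, Finset.mem_filter] at hp hq
      have h1 := (mem_skew_iff.mp hp.1).1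
      have h2 := (mem_skew_iff.mp hq.1).1
      simp only [Prod.mk.injEq] at heq ⊢
      obtain ⟨he1, he2⟩ := heq
      subst he2
      omega
  omega

lemma exists_LR_of_ne {lam mu nu : YoungDiagram} (h : lrCoeff lam mu nu ≠ 0) :
    ∃ T, IsLR lam mu nu T := by
  rw [lrCoeff] at h
  split_ifs at h with hle
  · exact Set.nonempty_of_ncard_ne_zero h
  · exact absurd rfl h

/-- the canonical LR filling: each cell gets its depth in its column -/
def canonical (lam mu : YoungDiagram) : ℕ × ℕ → ℕ :=
  fun p => if p ∈ skewCells lam mu then p.1 + 1 - mu.colLen p.2 else 0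

lemma canonical_eq {lam mu : YoungDiagram} {i j : ℕ} (h : (i, j) ∈ skewCells lam mu) :
    canonical lam mu (i, j) = i + 1 - mu.colLen j := by
  simp [canonical, h]

lemma canonical_ssyt (lam mu : YoungDiagram) : IsSSYT lam mu (canonical lam mu) := by
  refine ⟨?_, ?_, ?_⟩
  · intro p
    constructor
    · intro hp
      rw [canonical, if_pos hp]
      have := (mem_skew_iff.mp (by exact hp : (p.1, p.2) ∈ skewCells lam mu)).1
      omega
    · intro hp
      by_contra hmem
      rw [canonical, if_neg hmem] at hp
      exact hp rfl
  · intro i j1 j2 h1 h2 hj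
    rw [canonical_eq h1, canonical_eq h2]
    exact Nat.sub_le_sub_left (mu.colLen_anti j1 j2 hj) _
  · intro i1 i2 j h1 h2 hi
    rw [canonical_eq h1, canonical_eq h2]
    have := (mem_skew_iff.mp h1).1
    omega

lemma canonical_lattice (lam mu : YoungDiagram) : IsLattice lam mu (canonical lam mu) := by
  intro i0 j0 k
  unfold prefixCount
  refine Finset.card_le_card_of_injOn (fun p => (p.1 - 1, p.2)) ?_ ?_
  · intro p hp
    obtain ⟨i, j⟩ := p
    simp only [Finset.mem_coe, Finset.mem_filter] at hp ⊢
    obtain ⟨hmem, hpref, hval⟩ := hp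
    rw [canonical_eq hmem] at hval
    rcases mem_skew_iff.mp hmem with ⟨hc, hl⟩
    have hi : i = mu.colLen j + k + 1 := by omega
    have hmem' : (i - 1, j) ∈ skewCells lam mu := mem_skew_iff.mpr ⟨by omega, by omega⟩
    refine ⟨hmem', Or.inl (by omega), ?_⟩
    rw [canonical_eq hmem']
    omega
  · intro p hp q hq heq
    obtain ⟨i, j⟩ := p
    obtain ⟨i', j'⟩ := q
    simp only [Finset.mem_coe, Finset.mem_filter] at hp hq
    obtain ⟨hm1, hpr1, hv1⟩ := hp
    obtain ⟨hm2, hpr2, hv2⟩ := hq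
    rw [canonical_eq hm1] at hv1
    rw [canonical_eq hm2] at hv2
    have h1 := (mem_skew_iff.mp hm1).1
    have h2 := (mem_skew_iff.mp hm2).1
    simp only [Prod.mk.injEq] at heq ⊢
    obtain ⟨he1, he2⟩ := heq
    subst he2
    omega

lemma canonical_content (lam mu : YoungDiagram) (i : ℕ) :
    content lam mu (canonical lam mu) (i + 1) = mstar lam mu (i + 1) := by
  unfold content mstar
  refine Finset.card_nbij' (fun p => p.2) (fun j => (mu.colLen j + i, j)) ?_ ?_ ?_ ?_
  · intro p hp
    obtain ⟨a, j⟩ := p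
    simp only [Finset.mem_coe, Finset.mem_filter, Finset.mem_range] at hp ⊢
    obtain ⟨hmem, hval⟩ := hp
    rw [canonical_eq hmem] at hval
    rcases mem_skew_iff.mp hmem with ⟨hc, hl⟩
    exact ⟨col_bound hmem, by unfold ht; omega⟩
  · intro j hj
    simp only [Finset.mem_coe, Finset.mem_filter, Finset.mem_range] at hj ⊢
    obtain ⟨hjr, hhj⟩ := hj
    unfold ht at hhj
    have hmem : (mu.colLen j + i, j) ∈ skewCells lam mu :=
      mem_skew_iff.mpr ⟨by omega, by omega⟩
    refine ⟨hmem, ?_⟩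
    rw [canonical_eq hmem]
    omega
  · intro p hp
    obtain ⟨a, j⟩ := p
    simp only [Finset.mem_coe, Finset.mem_filter] at hp
    obtain ⟨hmem, hval⟩ := hp
    rw [canonical_eq hmem] at hval
    have hc := (mem_skew_iff.mp hmem).1
    simp only [Prod.mk.injEq, and_true]
    omega
  · intro j hj
    rfl

/-- the content partition of the canonical filling -/
def nuStar (lam mu : YoungDiagram) : YoungDiagram :=
  ⟨(Finset.range (lam.colLen 0) ×ˢ Finset.range (lam.rowLen 0)).filter
      fun p => p.2 < mstar lam mu (p.1 + 1), by
    intro a b hab ha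
    simp only [Finset.coe_filter, Set.mem_setOf_eq, Finset.mem_product, Finset.mem_range] at ha ⊢
    exact ⟨⟨lt_of_le_of_lt hab.1 ha.1.1, lt_of_le_of_lt hab.2 ha.1.2⟩,
      lt_of_le_of_lt hab.2 (lt_of_lt_of_le ha.2 (mstar_anti lam mu (Nat.add_le_add_right hab.1 1)))⟩⟩

lemma mem_nuStar {lam mu : YoungDiagram} {i j : ℕ} :
    (i, j) ∈ nuStar lam mu ↔ j < mstar lam mu (i + 1) := by
  show (i, j) ∈ Finset.filter _ _ ↔ _
  simp only [Finset.mem_filter, Finset.mem_product, Finset.mem_range]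
  constructor
  · rintro ⟨_, h⟩; exact h
  · intro h
    have hpos : 0 < mstar lam mu (i + 1) := by omega
    have : ∃ j0, j0 ∈ (Finset.range (lam.rowLen 0)).filter fun j0 => i + 1 ≤ ht lam mu j0 :=
      Finset.card_pos.mp hpos
    obtain ⟨j0, hj0⟩ := this
    simp only [Finset.mem_filter, Finset.mem_range] at hj0
    have h1 : i < lam.colLen 0 := by
      have := lam.colLen_anti 0 j0 (Nat.zero_le j0)
      unfold ht at hj0
      omega
    have h2 : j < lam.rowLen 0 := by
      have := Finset.card_filter_le (Finset.range (lam.rowLen 0))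
        (fun j0 => i + 1 ≤ ht lam mu j0)
      rw [Finset.card_range] at this
      unfold mstar at h
      omega
    exact ⟨⟨h1, h2⟩, h⟩

lemma rowLen_nuStar (lam mu : YoungDiagram) (i : ℕ) :
    (nuStar lam mu).rowLen i = mstar lam mu (i + 1) := by
  have hmem : ∀ j, j < (nuStar lam mu).rowLen i ↔ j < mstar lam mu (i + 1) := by
    intro j
    rw [← YoungDiagram.mem_iff_lt_rowLen, mem_nuStar]
  have h1 := hmem ((nuStar lam mu).rowLen i)
  have h2 := hmem (mstar lam mu (i + 1))
  omega

lemma canonical_isLR (lam mu : YoungDiagram) :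
    IsLR lam mu (nuStar lam mu) (canonical lam mu) :=
  ⟨canonical_ssyt lam mu, canonical_lattice lam mu,
    fun i => by rw [canonical_content, rowLen_nuStar]⟩

lemma lr_bounded {lam mu nu : YoungDiagram} {T : ℕ × ℕ → ℕ} (hT : IsLR lam mu nu T) :
    ∀ p, T p ≠ 0 → p ∈ skewCells lam mu ∧ T p ≤ nu.colLen 0 := by
  intro p hp
  have hmem : p ∈ skewCells lam mu := (hT.1.1 p).mpr hp
  refine ⟨hmem, ?_⟩
  set v := T p - 1 with hv
  have hcont := hT.2.2 v
  have hpos : 0 < content lam mu T (v + 1) := by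
    rw [content]
    refine Finset.card_pos.mpr ⟨p, Finset.mem_filter.mpr ⟨hmem, by omega⟩⟩
  rw [hcont] at hpos
  have : (v, 0) ∈ nu := YoungDiagram.mem_iff_lt_rowLen.mpr hpos
  have := YoungDiagram.mem_iff_lt_colLen.mp this
  omega

lemma lr_finite (lam mu nu : YoungDiagram) : {T : ℕ × ℕ → ℕ | IsLR lam mu nu T}.Finite := by
  classical
  set B := nu.colLen 0 with hB
  set Φ : (ℕ × ℕ → ℕ) → (↥(skewCells lam mu) → Fin (B + 1)) :=
    fun T p => if h : T ↑p ≤ B then ⟨T ↑p, by omega⟩ else 0 with hΦ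
  have : Set.InjOn Φ {T : ℕ × ℕ → ℕ | IsLR lam mu nu T} := by
    intro T hT T' hT' heq
    funext p
    by_cases hp : p ∈ skewCells lam mu
    · have h1 := (lr_bounded hT p)
      have h2 := (lr_bounded hT' p)
      have hT0 : T p ≤ B := by
        by_cases h : T p = 0
        · omega
        · exact (h1 h).2
      have hT'0 : T' p ≤ B := by
        by_cases h : T' p = 0
        · omega
        · exact (h2 h).2
      have := congrFun heq ⟨p, hp⟩
      simp only [hΦ, dif_pos hT0, dif_pos hT'0, Fin.mk.injEq] at this
      exact this
    · have h1 : T p = 0 := by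
        by_contra h
        exact hp ((hT.1.1 p).mpr h)
      have h2 : T' p = 0 := by
        by_contra h
        exact hp ((hT'.1.1 p).mpr h)
      rw [h1, h2]
  exact Set.Finite.of_finite_image (Set.toFinite _) this

lemma lrCoeff_nuStar_ne (lam mu : YoungDiagram) (hmu : mu ≤ lam) :
    lrCoeff lam mu (nuStar lam mu) ≠ 0 := by
  rw [lrCoeff, if_pos hmu]
  have := (Set.ncard_pos (lr_finite lam mu (nuStar lam mu))).mpr
    ⟨canonical lam mu, canonical_isLR lam mu⟩
  omega

lemma mstar_eq {lam mu alp bet : YoungDiagram} (hmu : mu ≤ lam) (hbet : bet ≤ alp)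
    (h : SchurEq lam mu alp bet) (k : ℕ) : mstar lam mu (k + 1) = mstar alp bet (k + 1) := by
  have key : ∀ n, ∑ i ∈ Finset.range n, mstar lam mu (i + 1) =
      ∑ i ∈ Finset.range n, mstar alp bet (i + 1) := by
    intro n
    apply le_antisymm
    · have h1 := lrCoeff_nuStar_ne lam mu hmu
      rw [h (nuStar lam mu)] at h1
      obtain ⟨T, hT⟩ := exists_LR_of_ne h1
      have := sum_le_mstar hT n
      calc ∑ i ∈ Finset.range n, mstar lam mu (i + 1)
          = ∑ i ∈ Finset.range n, (nuStar lam mu).rowLen i :=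
            Finset.sum_congr rfl fun i _ => (rowLen_nuStar lam mu i).symm
        _ ≤ _ := this
    · have h1 := lrCoeff_nuStar_ne alp bet hbet
      rw [← h (nuStar alp bet)] at h1
      obtain ⟨T, hT⟩ := exists_LR_of_ne h1
      have := sum_le_mstar hT n
      calc ∑ i ∈ Finset.range n, mstar alp bet (i + 1)
          = ∑ i ∈ Finset.range n, (nuStar alp bet).rowLen i :=
            Finset.sum_congr rfl fun i _ => (rowLen_nuStar alp bet i).symm
        _ ≤ _ := this
  have h1 := key k
  have h2 := key (k + 1)
  rw [Finset.sum_range_succ, Finset.sum_range_succ] at h2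
  omega

lemma set_eq_filter (lam mu : YoungDiagram) {h' : ℕ} (hpos : 0 < h') :
    {j : ℕ | lam.colLen j - mu.colLen j = h'} =
      ↑((Finset.range (lam.rowLen 0)).filter fun j => ht lam mu j = h') := by
  ext j
  rw [Finset.mem_coe, Finset.mem_filter]
  simp only [Set.mem_setOf_eq, Finset.coe_filter, Finset.mem_range, Set.mem_setOf_eq, ht]
  constructor
  · intro hj
    refine ⟨?_, hj⟩
    have hc : 0 < lam.colLen j := by omega
    have : (0, j) ∈ lam := YoungDiagram.mem_iff_lt_colLen.mpr hc
    exact YoungDiagram.mem_iff_lt_rowLen.mp this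
  · exact fun hj => hj.2

lemma card_eq_mstar_sub (lam mu : YoungDiagram) {h' : ℕ} (hpos : 0 < h') :
    ((Finset.range (lam.rowLen 0)).filter fun j => ht lam mu j = h').card
      + mstar lam mu (h' + 1) = mstar lam mu h' := by
  unfold mstar
  rw [← Finset.card_union_of_disjoint]
  · congr 1
    ext j
    simp only [Finset.mem_union, Finset.mem_filter, Finset.mem_range]
    omega
  · refine Finset.disjoint_left.mpr ?_
    intro j hj hj'
    simp only [Finset.mem_filter] at hj hj'
    omega


/-- skew diagrams with equal skew Schur functions have the same multiset of
column heights. -/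
theorem colHeights_eq_of_schurEq (lam mu alp bet : YoungDiagram)
    (hmu : mu ≤ lam) (hbet : bet ≤ alp) (h : SchurEq lam mu alp bet) :
    ∀ h' : ℕ, 0 < h' →
      {j : ℕ | lam.colLen j - mu.colLen j = h'}.ncard =
        {j : ℕ | alp.colLen j - bet.colLen j = h'}.ncard := by
  intro h' hpos
  rw [set_eq_filter lam mu hpos, set_eq_filter alp bet hpos,
    Set.ncard_coe_finset, Set.ncard_coe_finset]
  have e1 := card_eq_mstar_sub lam mu hpos
  have e2 := card_eq_mstar_sub alp bet hpos
  have q1 : mstar lam mu h' = mstar alp bet h' := by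
    obtain ⟨k, rfl⟩ := Nat.exists_eq_add_of_lt hpos
    simpa using mstar_eq hmu hbet h k
  have q2 := mstar_eq hmu hbet h h'
  omega


end LRSkew
end

section
/- Filling each column of a skew diagram λ/μ with the entries 1, 2, …, h (where h is the height of that column) from top to bottom produces a Littlewood-Richardson tableau, and its content is the decreasing rearrangement of the column heights of λ/μ. -/
open YoungDiagram
open scoped Classical

namespace LRSkew

lemma mem_skewCells_iff {lam mu : YoungDiagram} {p : ℕ × ℕ} :
    p ∈ skewCells lam mu ↔ mu.colLen p.2 ≤ p.1 ∧ p.1 < lam.colLen p.2 := by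
  cases' p with i j
  simp [skewCells, Finset.mem_sdiff, YoungDiagram.mem_cells, mem_iff_lt_colLen, not_lt,
    and_comm]

/-- filling every column of `lam/mu` with `1, 2, …, h` from top to bottom gives
an LR filling whose content is the decreasing rearrangement of the column heights. -/
theorem column_filling_isLR (lam mu : YoungDiagram) (hmu : mu ≤ lam) :
    IsSSYT lam mu (fun p => if p ∈ skewCells lam mu then p.1 - mu.colLen p.2 + 1 else 0) ∧
    IsLattice lam mu (fun p => if p ∈ skewCells lam mu then p.1 - mu.colLen p.2 + 1 else 0) ∧
    ∀ k : ℕ,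
      content lam mu (fun p => if p ∈ skewCells lam mu then p.1 - mu.colLen p.2 + 1 else 0)
          (k + 1) =
        {j : ℕ | k + 1 ≤ lam.colLen j - mu.colLen j}.ncard := by
  set T : ℕ × ℕ → ℕ := fun p => if p ∈ skewCells lam mu then p.1 - mu.colLen p.2 + 1 else 0
    with hT
  have hTval : ∀ p ∈ skewCells lam mu, T p = p.1 - mu.colLen p.2 + 1 := fun p hp => if_pos hp
  have key : ∀ p ∈ skewCells lam mu, ∀ k : ℕ, T p = k + 1 ↔ p.1 = mu.colLen p.2 + k := by
    intro p hp k
    rw [hTval p hp]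
    have h1 := (mem_skewCells_iff.mp hp).1
    omega
  refine ⟨⟨?_, ?_, ?_⟩, ?_, ?_⟩
  · intro p
    constructor
    · intro hp
      rw [hTval p hp]
      exact Nat.succ_ne_zero _
    · intro h
      by_contra hp
      exact h (if_neg hp)
  · intro i j1 j2 h1 h2 hj
    rw [hTval _ h1, hTval _ h2]
    have := mu.colLen_anti j1 j2 hj
    show i - mu.colLen j1 + 1 ≤ i - mu.colLen j2 + 1
    omega
  · intro i1 i2 j h1 h2 hi
    rw [hTval _ h1, hTval _ h2]
    have : mu.colLen j ≤ i1 := (mem_skewCells_iff.mp h1).1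
    show i1 - mu.colLen j + 1 < i2 - mu.colLen j + 1
    omega
  · -- lattice
    intro i j k
    apply Finset.card_le_card_of_injOn (fun p => (p.1 - 1, p.2))
    · intro p hp
      simp only [Finset.coe_filter, Finset.mem_filter, Set.mem_setOf_eq] at hp ⊢
      obtain ⟨hps, hpre, hval⟩ := hp
      have hp1 : p.1 = mu.colLen p.2 + (k + 1) := (key p hps (k + 1)).mp hval
      obtain ⟨hc1, hc2⟩ := mem_skewCells_iff.mp hps
      have hmem : (p.1 - 1, p.2) ∈ skewCells lam mu := by
        rw [mem_skewCells_iff]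
        show mu.colLen p.2 ≤ p.1 - 1 ∧ p.1 - 1 < lam.colLen p.2
        omega
      refine ⟨hmem, ?_, ?_⟩
      · show p.1 - 1 < i ∨ (p.1 - 1 = i ∧ j ≤ p.2)
        omega
      · rw [(key _ hmem k)]
        show p.1 - 1 = mu.colLen p.2 + k
        omega
    · intro p hp q hq hpq
      simp only [Finset.coe_filter, Set.mem_setOf_eq] at hp hq
      have hp1 : p.1 = mu.colLen p.2 + (k + 1) := (key p hp.1 (k + 1)).mp hp.2.2
      have hq1 : q.1 = mu.colLen q.2 + (k + 1) := (key q hq.1 (k + 1)).mp hq.2.2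
      simp only [Prod.mk.injEq] at hpq
      exact Prod.ext (by rw [hp1, hq1, hpq.2]) hpq.2
  · -- content
    intro k
    have hmono : ∀ j, mu.colLen j ≤ lam.colLen j := by
      intro j
      by_contra h
      push_neg at h
      have : (lam.colLen j, j) ∈ mu := mem_iff_lt_colLen.mpr h
      have : (lam.colLen j, j) ∈ lam := hmu this
      rw [mem_iff_lt_colLen] at this
      omega
    set J : Finset ℕ := (Finset.range (lam.rowLen 0)).filter
      (fun j => k + 1 ≤ lam.colLen j - mu.colLen j) with hJ
    have hset : {j : ℕ | k + 1 ≤ lam.colLen j - mu.colLen j} = ↑J := by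
      ext j
      simp only [Set.mem_setOf_eq, hJ, Finset.coe_filter, Finset.mem_range]
      constructor
      · intro h
        refine ⟨?_, h⟩
        have hpos : 0 < lam.colLen j := by omega
        have : (0, j) ∈ lam := mem_iff_lt_colLen.mpr hpos
        rwa [mem_iff_lt_rowLen] at this
      · exact fun h => h.2
    rw [hset, Set.ncard_coe_finset]
    rw [content]
    have himg : (skewCells lam mu).filter (fun p => T p = k + 1) =
        J.image (fun j => (mu.colLen j + k, j)) := by
      ext p
      simp only [Finset.mem_filter, Finset.mem_image, hJ, Finset.mem_range]
      constructor
      · rintro ⟨hps, hval⟩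
        have hp1 : p.1 = mu.colLen p.2 + k := (key p hps k).mp hval
        obtain ⟨hc1, hc2⟩ := mem_skewCells_iff.mp hps
        refine ⟨p.2, ⟨?_, ?_⟩, ?_⟩
        · have hpos : 0 < lam.colLen p.2 := by omega
          have : (0, p.2) ∈ lam := mem_iff_lt_colLen.mpr hpos
          rwa [mem_iff_lt_rowLen] at this
        · have := hmono p.2; omega
        · exact Prod.ext hp1.symm rfl
      · rintro ⟨j, hj, rfl⟩
        obtain ⟨-, hj2⟩ := hj
        have hjm := hmono j
        have hmem : (mu.colLen j + k, j) ∈ skewCells lam mu := by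
          rw [mem_skewCells_iff]
          show mu.colLen j ≤ mu.colLen j + k ∧ mu.colLen j + k < lam.colLen j
          omega
        exact ⟨hmem, (key _ hmem k).mpr rfl⟩
    rw [himg]
    apply Finset.card_image_of_injective
    intro a b hab
    exact congrArg Prod.snd hab

end LRSkew
end
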